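/- arXiv:1710.08983 — 2 statements merged into one kernel-verified Lean document; each statement's English description precedes it below -/
import Mathlib

section
/- Let A ∈ GL(k, ℤ) be a matrix of infinite order (in the group GL(k,ℤ)) such that every complex eigenvalue of A is a root of unity. Then for every m ∈ ℕ with m ≥ 1 there exists n ≥ 1 such that the quotient group ℤ^k / (A^n - I)ℤ^k contains an element of order m. -/
open Polynomial

private lemma aux_prod_dvd {M : Type*} [CommMonoid M] (q : M) (s : Multiset M)
    (h : ∀ a ∈ s, a ∣ q) : s.prod ∣ q ^ Multiset.card s := by
  induction s using Multiset.induction_on with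
  | empty => simp
  | cons a s ih =>
    rw [Multiset.prod_cons, Multiset.card_cons, pow_succ, mul_comm (q ^ Multiset.card s) q]
    exact mul_dvd_mul (h a (Multiset.mem_cons_self a s))
      (ih fun b hb => h b (Multiset.mem_cons_of_mem hb))

private lemma aux_poly (t : ℕ) :
    ∃ q : Polynomial ℤ, (1 + X) ^ t = 1 + C (t : ℤ) * X + X ^ 2 * q := by
  induction t with
  | zero => exact ⟨0, by simp⟩
  | succ t ih =>
    obtain ⟨q, hq⟩ := ih
    refine ⟨C (t : ℤ) + q + X * q, ?_⟩
    rw [pow_succ, hq]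
    push_cast [map_add, map_one]
    ring

theorem stmt_3 (k : ℕ) (A : Matrix (Fin k) (Fin k) ℤ) (hA : IsUnit A)
    (hinf : ∀ n : ℕ, 1 ≤ n → A ^ n ≠ 1)
    (heig : ∀ z : ℂ, ((A.map (Int.cast : ℤ → ℂ)).charpoly).IsRoot z →
      ∃ d : ℕ, 1 ≤ d ∧ z ^ d = 1)
    (m : ℕ) (hm : 1 ≤ m) :
    ∃ n : ℕ, 1 ≤ n ∧
      ∃ x : (Fin k → ℤ) ⧸ LinearMap.range (Matrix.toLin' (A ^ n - 1)),
        addOrderOf x = m := by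
  classical
  rcases Nat.eq_zero_or_pos k with hk0 | hk
  · exfalso
    apply hinf 1 le_rfl
    subst hk0
    exact Subsingleton.elim _ _
  rcases eq_or_lt_of_le hm with hm1 | hm2
  · exact ⟨1, le_rfl, 0, by rw [addOrderOf_zero, hm1]⟩
  -- Step 1: a power of A is unipotent
  obtain ⟨n₀, hn₀pos, hroot⟩ : ∃ n₀ : ℕ, 1 ≤ n₀ ∧
      ∀ z ∈ ((A.map (Int.cast : ℤ → ℂ)).charpoly).roots, z ^ n₀ = 1 := by
    set p := (A.map (Int.cast : ℤ → ℂ)).charpoly with hp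
    have hmem : ∀ z ∈ p.roots.toFinset, p.IsRoot z := fun z hz =>
      Polynomial.isRoot_of_mem_roots (Multiset.mem_toFinset.mp hz)
    refine ⟨∏ z ∈ p.roots.toFinset.attach, (heig z.1 (hmem z.1 z.2)).choose, ?_, ?_⟩
    · exact Finset.one_le_prod' fun z _ => (heig z.1 (hmem z.1 z.2)).choose_spec.1
    · intro z hz
      have hzt : z ∈ p.roots.toFinset := Multiset.mem_toFinset.mpr hz
      have hdvd : (heig z (hmem z hzt)).choose ∣
          ∏ w ∈ p.roots.toFinset.attach, (heig w.1 (hmem w.1 w.2)).choose :=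
        Finset.dvd_prod_of_mem _ (Finset.mem_attach _ ⟨z, hzt⟩)
      obtain ⟨c, hc⟩ := hdvd
      rw [hc, pow_mul, (heig z (hmem z hzt)).choose_spec.2, one_pow]
  have hBnil : (A ^ n₀ - 1) ^ k = 0 := by
    set Mc := A.map (Int.cast : ℤ → ℂ) with hMc
    set p := Mc.charpoly with hp
    have hmonic : p.Monic := Matrix.charpoly_monic _
    have hsplits : p.Splits := IsAlgClosed.splits p
    have hcard : Multiset.card p.roots = k := by
      have h1 := hsplits.natDegree_eq_card_roots.symm
      rw [h1, Matrix.charpoly_natDegree_eq_dim, Fintype.card_fin]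
    have hpdvd : p ∣ (X ^ n₀ - 1) ^ k := by
      conv_lhs => rw [hsplits.eq_prod_roots_of_monic hmonic]
      rw [← hcard]
      have := aux_prod_dvd (M := Polynomial ℂ) (X ^ n₀ - 1)
        (p.roots.map fun a => X - C a) ?_
      · simpa using this
      · intro a ha
        obtain ⟨z, hz, rfl⟩ := Multiset.mem_map.mp ha
        refine Polynomial.dvd_iff_isRoot.mpr ?_
        simp [Polynomial.IsRoot, hroot z hz]
    obtain ⟨h, hh⟩ := hpdvd
    have haev : (Mc ^ n₀ - 1) ^ k = 0 := by
      have h1 : Polynomial.aeval Mc ((X ^ n₀ - 1 : Polynomial ℂ) ^ k) = 0 := by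
        rw [hh, map_mul, Matrix.aeval_self_charpoly, zero_mul]
      rw [map_pow, map_sub, map_pow, Polynomial.aeval_X, map_one] at h1
      exact h1
    have hmap : ((A ^ n₀ - 1) ^ k).map (Int.cast : ℤ → ℂ) = 0 := by
      have hrh : ∀ (M P : Matrix (Fin k) (Fin k) ℤ), (M * P).map (Int.cast : ℤ → ℂ)
          = M.map (Int.cast : ℤ → ℂ) * P.map (Int.cast : ℤ → ℂ) := fun M P => by
        ext i j
        simp [Matrix.map_apply, Matrix.mul_apply]
      have := congrArg (fun M : Matrix (Fin k) (Fin k) ℤ =>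
        M.map (Int.cast : ℤ → ℂ)) (rfl : (A ^ n₀ - 1) ^ k = (A ^ n₀ - 1) ^ k)
      -- use ring hom mapMatrix instead
      have hrm : ((A ^ n₀ - 1) ^ k).map (Int.cast : ℤ → ℂ)
          = ((Int.castRingHom ℂ).mapMatrix ((A ^ n₀ - 1) ^ k)) := rfl
      rw [hrm, map_pow, map_sub, map_pow, map_one]
      have : (Int.castRingHom ℂ).mapMatrix A = Mc := rfl
      rw [this]
      exact haev
    ext i l
    have := congrFun (congrFun hmap i) l
    simp only [Matrix.map_apply, Matrix.zero_apply] at this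
    exact_mod_cast this
  obtain ⟨B, hB⟩ : ∃ B, B = A ^ n₀ := ⟨_, rfl⟩
  obtain ⟨N, hN⟩ : ∃ N, N = B - 1 := ⟨_, rfl⟩
  have hNnil : N ^ k = 0 := by rw [hN, hB]; exact hBnil
  have hNne : N ≠ 0 := by
    rw [hN, hB]
    exact sub_ne_zero.mpr (hinf n₀ hn₀pos)
  have hBN : B = 1 + N := by rw [hN]; abel
  -- nilpotency index
  have hex : ∃ i, N ^ i = 0 := ⟨k, hNnil⟩
  have hi₀ : N ^ Nat.find hex = 0 := Nat.find_spec hex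
  have hi₀2 : 2 ≤ Nat.find hex := by
    by_contra h
    have h01 : Nat.find hex = 0 ∨ Nat.find hex = 1 := by omega
    rcases h01 with h | h <;> rw [h] at hi₀
    · rw [pow_zero] at hi₀
      have := congrFun (congrFun hi₀ ⟨0, hk⟩) ⟨0, hk⟩
      simp [Matrix.one_apply_eq] at this
    · rw [pow_one] at hi₀
      exact hNne hi₀
  obtain ⟨j', hj'⟩ : ∃ j', Nat.find hex = j' + 2 := ⟨Nat.find hex - 2, by omega⟩
  have hNj : N ^ (j' + 1) ≠ 0 := Nat.find_min hex (by omega)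
  have hNj1 : N ^ (j' + 2) = 0 := by rw [← hj']; exact hi₀
  -- Step 2: order of B mod m
  haveI : NeZero m := ⟨by omega⟩
  set φ : Matrix (Fin k) (Fin k) ℤ →+* Matrix (Fin k) (Fin k) (ZMod m) :=
    (Int.castRingHom (ZMod m)).mapMatrix with hφ
  obtain ⟨t₀, ht₀pos, ht₀⟩ : ∃ t₀ : ℕ, 1 ≤ t₀ ∧ (φ B) ^ t₀ = 1 := by
    have hu : IsUnit (φ B) := ((hB ▸ hA.pow n₀ : IsUnit B)).map φ
    refine ⟨orderOf hu.unit, orderOf_pos hu.unit, ?_⟩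
    have h2 := congrArg (Units.val) (pow_orderOf_eq_one hu.unit)
    rw [Units.val_pow_eq_pow_val, hu.unit_spec] at h2
    exact h2
  refine ⟨n₀ * (t₀ * m), Nat.one_le_iff_ne_zero.mpr (Nat.mul_ne_zero (by omega) (Nat.mul_ne_zero (by omega) (by omega))), ?_⟩
  have hgoalC : A ^ (n₀ * (t₀ * m)) - 1 = B ^ (t₀ * m) - 1 := by rw [pow_mul, hB]
  rw [hgoalC]
  obtain ⟨C, hC⟩ : ∃ C, C = B ^ (t₀ * m) - 1 := ⟨_, rfl⟩
  rw [← hC]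
  -- entries of C divisible by m
  have hCmod : ∀ i l, (m : ℤ) ∣ C i l := by
    have h0 : φ C = 0 := by
      rw [hC, map_sub, map_one, map_pow, pow_mul, ht₀, one_pow, sub_self]
    intro i l
    have h2 := congrFun (congrFun h0 i) l
    simp only [hφ, RingHom.mapMatrix_apply, Matrix.map_apply, Matrix.zero_apply] at h2
    exact (ZMod.intCast_zmod_eq_zero_iff_dvd _ _).mp h2
  -- key identity
  obtain ⟨r, hcomm, hbin⟩ : ∃ r : Matrix (Fin k) (Fin k) ℤ,
      Commute N r ∧ B ^ (t₀ * m) = 1 + ((t₀ * m : ℕ) : ℤ) • N + N ^ 2 * r := by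
    obtain ⟨q, hq⟩ := aux_poly (t₀ * m)
    refine ⟨Polynomial.aeval N q, ?_, ?_⟩
    · have hcq : Commute (X : Polynomial ℤ) q := Commute.all _ _
      have := hcq.map (Polynomial.aeval N).toRingHom
      simpa using this
    · have := congrArg (Polynomial.aeval N) hq
      simp only [map_pow, map_add, map_mul, map_one, Polynomial.aeval_X,
        Polynomial.aeval_C] at this
      rw [hBN, this]
      congr 1
      congr 1
      rw [Algebra.algebraMap_eq_smul_one, smul_mul_assoc, one_mul]
  have hkey : C * N ^ j' = ((t₀ * m : ℕ) : ℤ) • N ^ (j' + 1) := by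
    have hz : N ^ 2 * N ^ j' = N ^ (j' + 2) := by rw [← pow_add, add_comm]
    have hCeq : C = ((t₀ * m : ℕ) : ℤ) • N + N ^ 2 * r := by
      rw [hC, hbin]; abel
    rw [hCeq, add_mul, smul_mul_assoc, ← pow_succ', mul_assoc,
      ← (hcomm.pow_left j').eq, ← mul_assoc, hz, hNj1, zero_mul, add_zero]
  -- the vector
  obtain ⟨i1, l1, hyne⟩ : ∃ i l, (N ^ (j' + 1)) i l ≠ 0 := by
    by_contra h
    push_neg at h
    exact hNj (by ext i l; simpa using h i l)
  obtain ⟨y, hy⟩ : ∃ y : Fin k → ℤ, y = fun i => (N ^ (j' + 1)) i l1 := ⟨_, rfl⟩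
  have hy1 : y i1 ≠ 0 := by rw [hy]; exact hyne
  obtain ⟨g, hg⟩ : ∃ g : ℤ, g = Finset.univ.gcd y := ⟨_, rfl⟩
  have hgdvd : ∀ i, g ∣ y i := fun i => hg ▸ Finset.gcd_dvd (Finset.mem_univ i)
  have hgne : g ≠ 0 := by
    intro h
    exact hy1 (zero_dvd_iff.mp (h ▸ hgdvd i1))
  have hgnn : 0 ≤ g := by
    have h1 : |g| = g := by rw [Int.abs_eq_normalize, hg, Finset.normalize_gcd]
    rw [← h1]; exact abs_nonneg g
  obtain ⟨x, hx⟩ : ∃ x : Fin k → ℤ, x = fun i => y i / g := ⟨_, rfl⟩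
  have hgx : ∀ i, g * x i = y i := by
    intro i
    rw [hx]
    exact Int.mul_ediv_cancel' (hgdvd i)
  -- image facts
  have him : C.mulVec ((N ^ j').mulVec (Pi.single l1 1)) = fun i => ((t₀ * m : ℕ) : ℤ) * y i := by
    rw [Matrix.mulVec_mulVec, hkey, Matrix.smul_mulVec, Matrix.mulVec_single_one]
    ext i
    rw [hy]
    simp only [Pi.smul_apply, smul_eq_mul, ← Matrix.transpose_pow, Matrix.transpose_apply, Matrix.col_apply]
  have hmemdvd : ∀ (d : ℕ) (w : Fin k → ℤ), C.mulVec w = (d : ℤ) • x → m ∣ d := by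
    intro d w hw
    have hdx : ∀ i, (m : ℤ) ∣ (d : ℤ) * x i := by
      intro i
      have h1 : (m : ℤ) ∣ (C.mulVec w) i := by
        simp only [Matrix.mulVec, dotProduct]
        exact Finset.dvd_sum fun l _ => Dvd.dvd.mul_right (hCmod i l) _
      rw [hw] at h1
      simpa using h1
    have hdy : ∀ i, (m : ℤ) * g ∣ (d : ℤ) * y i := by
      intro i
      rw [← hgx i, show (d : ℤ) * (g * x i) = g * ((d : ℤ) * x i) from by ring,
        mul_comm (m : ℤ) g]
      exact mul_dvd_mul_left g (hdx i)
    have hgcd : (m : ℤ) * g ∣ (d : ℤ) * g := by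
      have h1 : (m : ℤ) * g ∣ Finset.univ.gcd (fun i => (d : ℤ) * y i) :=
        Finset.dvd_gcd fun i _ => hdy i
      rwa [Finset.gcd_mul_left, Int.normalize_coe_nat, ← hg] at h1
    have h2 : (m : ℤ) ∣ (d : ℤ) := (mul_dvd_mul_iff_right hgne).mp hgcd
    exact_mod_cast h2
  -- conclude
  set Q := (Fin k → ℤ) ⧸ LinearMap.range (Matrix.toLin' C) with hQ
  set xq : Q := Submodule.Quotient.mk x with hxq
  have hsm : ∀ d : ℕ, d • xq = 0 → m ∣ d := by
    intro d hd
    rw [hxq, ← natCast_zsmul, ← Submodule.Quotient.mk_smul,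
      Submodule.Quotient.mk_eq_zero] at hd
    obtain ⟨w, hw⟩ := hd
    rw [Matrix.toLin'_apply] at hw
    exact hmemdvd d w hw
  have hfin : (t₀ * m * g.toNat) • xq = 0 := by
    rw [hxq, ← natCast_zsmul, ← Submodule.Quotient.mk_smul,
      Submodule.Quotient.mk_eq_zero]
    refine ⟨(N ^ j').mulVec (Pi.single l1 1), ?_⟩
    rw [Matrix.toLin'_apply, him]
    ext i
    have heq : ((t₀ * m * g.toNat : ℕ) : ℤ) * x i = ((t₀ * m : ℕ) : ℤ) * y i := by
      push_cast
      rw [Int.toNat_of_nonneg hgnn, mul_assoc, hgx i]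
    simpa using heq.symm
  have hfo : IsOfFinAddOrder xq := by
    rw [isOfFinAddOrder_iff_nsmul_eq_zero]
    refine ⟨t₀ * m * g.toNat, ?_, hfin⟩
    have hgt : g.toNat ≠ 0 := by omega
    positivity
  have hT : 0 < addOrderOf xq := addOrderOf_pos_iff.mpr hfo
  have hmT : m ∣ addOrderOf xq := hsm _ (addOrderOf_nsmul_eq_zero _)
  obtain ⟨s, hs⟩ := hmT
  have hspos : s ≠ 0 := by
    intro h
    rw [h, mul_zero] at hs
    omega
  refine ⟨s • xq, ?_⟩
  rw [addOrderOf_nsmul' _ hspos, hs, Nat.gcd_eq_right ⟨m, mul_comm m s⟩,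
    Nat.mul_div_cancel m (Nat.pos_of_ne_zero hspos)]
end

section
/- Kronecker's theorem: let p(t) be a monic polynomial with integer coefficients, all of whose complex roots are nonzero and have absolute value at most 1. Then every root of p is a root of unity. -/
open Polynomial IntermediateField

theorem stmt_15 (p : Polynomial ℤ) (hmonic : p.Monic)
    (hroots : ∀ z : ℂ, Polynomial.aeval z p = 0 → z ≠ 0 ∧ ‖z‖ ≤ 1) :
    ∀ z : ℂ, Polynomial.aeval z p = 0 → ∃ d : ℕ, 1 ≤ d ∧ z ^ d = 1 := by
  classical
  intro z hz
  obtain ⟨hz0, -⟩ := hroots z hz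
  -- z is integral over ℤ
  have hzint : IsIntegral ℤ z := ⟨p, hmonic, hz⟩
  have hzQ : IsIntegral ℚ z := hzint.tower_top
  -- the number field K = ℚ⟮z⟯
  set K := ℚ⟮z⟯
  haveI : FiniteDimensional ℚ K := IntermediateField.adjoin.finiteDimensional hzQ
  haveI : NumberField K := ⟨⟩
  set x : K := IntermediateField.AdjoinSimple.gen ℚ z with hx
  have hxz : (algebraMap K ℂ) x = z := rfl
  have hinj : Function.Injective (algebraMap K ℂ) := (algebraMap K ℂ).injective
  -- x is integral over ℤ
  have hxint : IsIntegral ℤ x := by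
    refine ⟨p, hmonic, ?_⟩
    apply hinj
    rw [map_zero, Polynomial.hom_eval₂, hxz]
    simpa [← IsScalarTower.algebraMap_eq, Polynomial.aeval_def,
      RingHom.ext_int ((algebraMap K ℂ).comp (Int.castRingHom K)) (Int.castRingHom ℂ)] using hz
  -- every conjugate of x is a root of p
  have hconj : ∀ φ : K →+* ℂ, (Polynomial.aeval (φ x) p = 0) := by
    intro φ
    have h1 : Polynomial.aeval x (p.map (algebraMap ℤ ℚ)) = 0 := by
      apply hinj
      rw [map_zero, Polynomial.aeval_map_algebraMap, ← Polynomial.aeval_algebraMap_apply, hxz]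
      simpa using hz
    have hdvd : minpoly ℚ x ∣ p.map (algebraMap ℤ ℚ) := minpoly.dvd ℚ x h1
    have hroot : Polynomial.aeval (φ x) (minpoly ℚ x) = 0 := by
      have : φ x ∈ Set.range fun ψ : K →+* ℂ => ψ x := ⟨φ, rfl⟩
      rw [NumberField.Embeddings.range_eval_eq_rootSet_minpoly K ℂ x] at this
      exact Polynomial.aeval_eq_zero_of_mem_rootSet this
    obtain ⟨q, hq⟩ := hdvd
    have : Polynomial.aeval (φ x) (p.map (algebraMap ℤ ℚ)) = 0 := by
      rw [hq, map_mul, hroot, zero_mul]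
    rwa [Polynomial.aeval_map_algebraMap] at this
  -- each conjugate has norm ≤ 1 and is nonzero
  have habs : ∀ φ : K →+* ℂ, φ x ≠ 0 ∧ ‖φ x‖ ≤ 1 := fun φ => hroots _ (hconj φ)
  -- the field norm of x is a nonzero rational integer
  have hx0 : x ≠ 0 := by
    intro h; apply hz0; rw [← hxz, h, map_zero]
  have hnorm0 : Algebra.norm ℚ x ≠ 0 := by
    exact (Algebra.norm_ne_zero_iff (R := ℚ)).mpr hx0
  have hnormint : IsIntegral ℤ (Algebra.norm ℚ x) := Algebra.isIntegral_norm ℚ hxint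
  obtain ⟨n, hn⟩ : ∃ n : ℤ, (n : ℚ) = Algebra.norm ℚ x := by
    obtain ⟨n, hn⟩ := IsIntegrallyClosed.isIntegral_iff.mp hnormint
    exact ⟨n, hn⟩
  have hn0 : n ≠ 0 := by
    intro h; apply hnorm0; rw [← hn, h]; norm_num
  have hge : (1 : ℝ) ≤ |(Algebra.norm ℚ x : ℝ)| := by
    rw [← hn]
    push_cast
    rw [← Int.cast_abs]
    exact_mod_cast Int.one_le_abs (by omega)
  -- product of all conjugate norms equals |norm| ≥ 1
  have hprod : (∏ σ : K →ₐ[ℚ] ℂ, ‖σ x‖) = |(Algebra.norm ℚ x : ℝ)| := by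
    have := Algebra.norm_eq_prod_embeddings ℚ ℂ x
    have h2 : ‖(algebraMap ℚ ℂ) (Algebra.norm ℚ x)‖ = |(Algebra.norm ℚ x : ℝ)| := by
      rw [eq_ratCast (algebraMap ℚ ℂ),
        show (((Algebra.norm ℚ) x : ℚ) : ℂ) = ((((Algebra.norm ℚ) x : ℝ)) : ℂ) by push_cast; ring,
        Complex.norm_real, Real.norm_eq_abs]
    rw [← h2, this, norm_prod]
  -- each conjugate has norm exactly 1
  have hone : ∀ φ : K →+* ℂ, ‖φ x‖ = 1 := by
    intro φ
    have hφ := habs φ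
    refine le_antisymm (by simpa using hφ.2) ?_
    -- embed φ as an alghom
    let σ0 : K →ₐ[ℚ] ℂ := φ.toRatAlgHom
    have hσ0 : σ0 x = φ x := rfl
    have key : (1 : ℝ) ≤ ∏ σ : K →ₐ[ℚ] ℂ, ‖σ x‖ := hprod ▸ hge
    have hsplit : (∏ σ : K →ₐ[ℚ] ℂ, ‖σ x‖) =
        ‖σ0 x‖ * ∏ σ ∈ Finset.univ.erase σ0, ‖σ x‖ :=
      (Finset.mul_prod_erase Finset.univ _ (Finset.mem_univ σ0)).symm
    have hrest : (∏ σ ∈ Finset.univ.erase σ0, ‖σ x‖) ≤ 1 := by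
      apply Finset.prod_le_one
      · intro σ _; exact norm_nonneg _
      · intro σ _; exact (hroots _ (hconj σ.toRingHom)).2
    have hrestnn : 0 ≤ ∏ σ ∈ Finset.univ.erase σ0, ‖σ x‖ :=
      Finset.prod_nonneg fun σ _ => norm_nonneg _
    have : (1 : ℝ) ≤ ‖σ0 x‖ * ∏ σ ∈ Finset.univ.erase σ0, ‖σ x‖ := by
      rw [← hsplit]; exact key
    have habs0 : (1 : ℝ) ≤ ‖σ0 x‖ := by
      by_contra hlt
      push_neg at hlt
      have := this.trans_lt <| by
        calc ‖σ0 x‖ * ∏ σ ∈ Finset.univ.erase σ0, ‖σ x‖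
            ≤ ‖σ0 x‖ * 1 := by
              exact mul_le_mul_of_nonneg_left hrest (norm_nonneg _)
          _ = ‖σ0 x‖ := mul_one _
          _ < 1 := hlt
      exact lt_irrefl 1 this
    simpa [hσ0] using habs0
  obtain ⟨d, hd0, hxd⟩ := NumberField.Embeddings.pow_eq_one_of_norm_eq_one K ℂ hxint hone
  refine ⟨d, hd0, ?_⟩
  rw [← hxz, ← map_pow, hxd, map_one]
end
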